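/- Let X_1,…,X_n be i.i.d. with density f bounded above by Δ on [−L, 0), n ≥ 7, and suppose the kernel K is everywhere positive, symmetric about zero, and monotonically decreasing in |u|. Then the local linear density estimator f̂(0) = e_1'(X'WX)^{-1}X'WF (with W = diag(K(Xᵢ/h)), F the empirical CDF vector, design rows (1, Xᵢ)) has a finite second moment: E[f̂(0)²] < ∞. -/

import Mathlib

open MeasureTheory Matrix
open scoped Classical

/-- The local linear (p = 1) density estimator of Cattaneo–Jansson–Ma at `xR`: the slope of
the weighted least squares fit of the empirical CDF values `F̂(Xᵢ)` on `(1, Xᵢ - xR)` with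
weights `K((Xᵢ - xR)/h)`. -/
noncomputable def lpdSlope (n : ℕ) (K : ℝ → ℝ) (h xR : ℝ) (ω : Fin n → ℝ) : ℝ :=
  let w : Fin n → ℝ := fun i => K ((ω i - xR) / h)
  let Fhat : Fin n → ℝ := fun i =>
    (n : ℝ)⁻¹ * ((Finset.univ.filter fun j => ω j ≤ ω i).card : ℝ)
  let G : Matrix (Fin 2) (Fin 2) ℝ :=
    Matrix.of fun k l => ∑ i, w i * (ω i - xR) ^ ((k : ℕ) + (l : ℕ))
  let b : Fin 2 → ℝ := fun k => ∑ i, w i * (ω i - xR) ^ (k : ℕ) * Fhat i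
  (G⁻¹ *ᵥ b) 1

open Set
open scoped ENNReal

lemma sum_identity {n : ℕ} (w x : Fin n → ℝ) :
    (∑ i, w i) * (∑ i, w i * x i ^ 2) - (∑ i, w i * x i) * (∑ i, w i * x i)
      = (1/2) * ∑ i, ∑ j, w i * w j * (x i - x j) ^ 2 := by
  have e : ∀ i : Fin n, ∑ j, w i * w j * (x i - x j) ^ 2
      = w i * (∑ j, w j * x j ^ 2) + (w i * x i ^ 2) * (∑ j, w j)
        - 2 * ((w i * x i) * (∑ j, w j * x j)) := by
    intro i
    simp only [Finset.mul_sum, ← Finset.sum_add_distrib, ← Finset.sum_sub_distrib]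
    exact Finset.sum_congr rfl fun j _ => by ring
  rw [Finset.sum_congr rfl fun i _ => e i]
  simp only [Finset.sum_add_distrib, Finset.sum_sub_distrib, ← Finset.sum_mul, ← Finset.mul_sum]
  ring

lemma num_identity {n : ℕ} (w x F : Fin n → ℝ) :
    (∑ i, w i) * (∑ i, w i * x i * F i) - (∑ i, w i * x i) * (∑ i, w i * F i)
      = ∑ i, ∑ j, w i * w j * (x j - x i) * F j := by
  have e : ∀ i : Fin n, ∑ j, w i * w j * (x j - x i) * F j
      = w i * (∑ j, w j * x j * F j) - (w i * x i) * (∑ j, w j * F j) := by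
    intro i
    rw [Finset.mul_sum, Finset.mul_sum, ← Finset.sum_sub_distrib]
    exact Finset.sum_congr rfl fun j _ => by ring
  rw [Finset.sum_congr rfl fun i _ => e i]
  simp only [Finset.sum_sub_distrib, ← Finset.sum_mul]

lemma slope_formula {n : ℕ} (w x F : Fin n → ℝ)
    (hdet : (∑ i, w i) * (∑ i, w i * x i ^ 2) - (∑ i, w i * x i) * (∑ i, w i * x i) ≠ 0) :
    ((Matrix.of fun k l : Fin 2 => ∑ i, w i * x i ^ ((k : ℕ) + (l : ℕ)))⁻¹ *ᵥ
        fun k : Fin 2 => ∑ i, w i * x i ^ (k : ℕ) * F i) 1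
      = ((∑ i, w i) * (∑ i, w i * x i * F i) - (∑ i, w i * x i) * (∑ i, w i * F i))
        / ((∑ i, w i) * (∑ i, w i * x i ^ 2) - (∑ i, w i * x i) * (∑ i, w i * x i)) := by
  set G : Matrix (Fin 2) (Fin 2) ℝ :=
    Matrix.of fun k l : Fin 2 => ∑ i, w i * x i ^ ((k : ℕ) + (l : ℕ)) with hG
  have hG00 : G 0 0 = ∑ i, w i := by simp [hG]
  have hG01 : G 0 1 = ∑ i, w i * x i := by simp [hG]
  have hG10 : G 1 0 = ∑ i, w i * x i := by simp [hG]
  have hG11 : G 1 1 = ∑ i, w i * x i ^ 2 := by simp [hG]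
  have hdetG : G.det = (∑ i, w i) * (∑ i, w i * x i ^ 2) - (∑ i, w i * x i) * (∑ i, w i * x i) := by
    rw [Matrix.det_fin_two, hG00, hG01, hG10, hG11]
  rw [Matrix.inv_def]
  rw [Matrix.smul_mulVec]
  have : ((G.adjugate *ᵥ fun k : Fin 2 => ∑ i, w i * x i ^ (k : ℕ) * F i)) 1
      = -(G 1 0) * (∑ i, w i * F i) + G 0 0 * (∑ i, w i * x i * F i) := by
    rw [Matrix.adjugate_fin_two]
    simp [Matrix.mulVec, dotProduct, Fin.sum_univ_two]
  simp only [Pi.smul_apply, smul_eq_mul, this, hdetG, hG10, hG00, Ring.inverse_eq_inv']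
  field_simp
  ring

noncomputable def Phi (x y : ℝ) : ℝ≥0∞ := (ENNReal.ofReal |x - y|) ^ (-(2/3) : ℝ)

lemma Phi_ne_zero (x y : ℝ) : Phi x y ≠ 0 := by
  rw [Phi]
  intro hcontra
  rcases ENNReal.rpow_eq_zero_iff.1 hcontra with ⟨-, h⟩ | ⟨h, -⟩
  · norm_num at h
  · exact ENNReal.ofReal_ne_top h

lemma Phi_top {x y : ℝ} (h : x = y) : Phi x y = ⊤ := by
  rw [Phi, h, sub_self, abs_zero, ENNReal.ofReal_zero]
  exact ENNReal.zero_rpow_of_neg (by norm_num)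

lemma Phi_ne_top {x y : ℝ} (h : x ≠ y) : Phi x y ≠ ⊤ := by
  rw [Phi, ENNReal.rpow_neg]
  exact ENNReal.inv_ne_top.2
    (ENNReal.rpow_pos (ENNReal.ofReal_pos.2 (abs_pos.2 (sub_ne_zero.2 h)))
      ENNReal.ofReal_ne_top).ne'

lemma slope_sq_le {n : ℕ} [NeZero n] (K : ℝ → ℝ) (L h : ℝ)
    (hL : 0 < L) (hh : 0 < h) (hK_pos : ∀ u, 0 < K u) (hK_symm : ∀ u, K (-u) = K u)
    (hK_mono : ∀ u v : ℝ, 0 ≤ u → u ≤ v → K v ≤ K u)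
    (j1 j2 j3 : Fin n)
    (h12 : j1 ≠ j2) (h13 : j1 ≠ j3) (h23 : j2 ≠ j3)
    (ω : Fin n → ℝ) (hω : ∀ i, ω i ∈ Set.Ico (-L) (0 : ℝ)) :
    ENNReal.ofReal ((lpdSlope n K h 0 ω) ^ 2)
      ≤ ENNReal.ofReal ((2 * (n : ℝ) ^ 2 * (K 0) ^ 2 / (K (L / h)) ^ 2) ^ 2) *
        (Phi (ω 0) (ω j1) * (Phi (ω 0) (ω j2) * Phi (ω 0) (ω j3))) := by
  have hn0 : (0 : ℝ) < n := Nat.cast_pos.2 (Nat.pos_of_ne_zero (NeZero.ne n))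
  have hc : 0 < K (L / h) := hK_pos _
  have hK0 : 0 < K 0 := hK_pos 0
  set B : ℝ := (n : ℝ) ^ 2 * (K 0) ^ 2 with hB
  set A : ℝ := 2 * (n : ℝ) ^ 2 * (K 0) ^ 2 / (K (L / h)) ^ 2 with hA
  have hApos : 0 < A := by positivity
  by_cases hz : ω 0 = ω j1 ∨ ω 0 = ω j2 ∨ ω 0 = ω j3
  · have htop : Phi (ω 0) (ω j1) * (Phi (ω 0) (ω j2) * Phi (ω 0) (ω j3)) = ⊤ := by
      rcases hz with hz | hz | hz
      · rw [Phi_top hz, ENNReal.top_mul (mul_ne_zero (Phi_ne_zero _ _) (Phi_ne_zero _ _))]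
      · rw [Phi_top hz, ENNReal.top_mul (Phi_ne_zero _ _), ENNReal.mul_top (Phi_ne_zero _ _)]
      · rw [Phi_top hz, ENNReal.mul_top (Phi_ne_zero _ _), ENNReal.mul_top (Phi_ne_zero _ _)]
    rw [htop, ENNReal.mul_top (ENNReal.ofReal_pos.2 (by positivity)).ne']
    exact le_top
  · push_neg at hz
    obtain ⟨hz1, hz2, hz3⟩ := hz
    set w : Fin n → ℝ := fun i => K (ω i / h) with hw
    have hwpos : ∀ i, 0 < w i := fun i => hK_pos _
    have hωneg : ∀ i, ω i < 0 := fun i => (hω i).2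
    have hωge : ∀ i, -L ≤ ω i := fun i => (hω i).1
    have hwle : ∀ i, w i ≤ K 0 := by
      intro i
      have h1 : ω i / h ≤ 0 := div_nonpos_iff.2 (Or.inr ⟨(hωneg i).le, hh.le⟩)
      have : K (-(ω i / h)) ≤ K 0 := hK_mono 0 _ le_rfl (by linarith)
      rwa [hK_symm] at this
    have hwge : ∀ i, K (L / h) ≤ w i := by
      intro i
      have h1 : -(ω i / h) ≤ L / h := by
        rw [neg_div' ] at *
        · rw [div_le_div_iff₀ hh hh]
          nlinarith [hωge i]
      have h2 : (0:ℝ) ≤ -(ω i / h) := by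
        have := (hωneg i).le
        have : ω i / h ≤ 0 := div_nonpos_iff.2 (Or.inr ⟨this, hh.le⟩)
        linarith
      have : K (L / h) ≤ K (-(ω i / h)) := hK_mono _ _ h2 h1
      rwa [hK_symm] at this
    set F : Fin n → ℝ := fun i =>
      (n : ℝ)⁻¹ * ((Finset.univ.filter fun j => ω j ≤ ω i).card : ℝ) with hF
    have hF0 : ∀ i, 0 ≤ F i := fun i => by positivity
    have hF1 : ∀ i, F i ≤ 1 := by
      intro i
      have hcard : ((Finset.univ.filter fun j => ω j ≤ ω i).card : ℝ) ≤ n := by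
        have := Finset.card_filter_le (Finset.univ : Finset (Fin n)) fun j => ω j ≤ ω i
        have h2 : (Finset.univ : Finset (Fin n)).card = n := by simp
        exact_mod_cast h2 ▸ this
      calc F i = (n : ℝ)⁻¹ * ((Finset.univ.filter fun j => ω j ≤ ω i).card : ℝ) := rfl
        _ ≤ (n : ℝ)⁻¹ * n := mul_le_mul_of_nonneg_left hcard (by positivity)
        _ = 1 := inv_mul_cancel₀ hn0.ne'
    have hne : (Finset.univ : Finset (Fin n)).Nonempty := Finset.univ_nonempty
    set D : ℝ := Finset.univ.sup' hne ω - Finset.univ.inf' hne ω with hD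
    have hDd : ∀ i j : Fin n, |ω i - ω j| ≤ D := by
      intro i j
      have h1 := Finset.le_sup' ω (Finset.mem_univ i)
      have h2 := Finset.le_sup' ω (Finset.mem_univ j)
      have h3 := Finset.inf'_le ω (Finset.mem_univ i)
      have h4 := Finset.inf'_le ω (Finset.mem_univ j)
      rw [abs_sub_le_iff]
      constructor <;> [linarith; linarith]
    have hDpos : 0 < D := lt_of_lt_of_le (abs_pos.2 (sub_ne_zero.2 hz1)) (hDd 0 j1)
    obtain ⟨a, -, hae⟩ := Finset.exists_mem_eq_sup' hne ω
    obtain ⟨bb, -, hbe⟩ := Finset.exists_mem_eq_inf' hne ω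
    have hab : ω a - ω bb = D := by rw [hD, ← hae, ← hbe]
    -- determinant lower bound
    have hterm : w a * w bb * (ω a - ω bb) ^ 2
        ≤ ∑ i, ∑ j, w i * w j * (ω i - ω j) ^ 2 := by
      have step1 : w a * w bb * (ω a - ω bb) ^ 2 ≤ ∑ j, w a * w j * (ω a - ω j) ^ 2 :=
        Finset.single_le_sum (f := fun j => w a * w j * (ω a - ω j) ^ 2)
          (fun j _ => mul_nonneg (mul_nonneg (hwpos a).le (hwpos j).le) (sq_nonneg _))
          (Finset.mem_univ bb)
      have step2 : ∑ j, w a * w j * (ω a - ω j) ^ 2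
          ≤ ∑ i, ∑ j, w i * w j * (ω i - ω j) ^ 2 :=
        Finset.single_le_sum (f := fun i => ∑ j, w i * w j * (ω i - ω j) ^ 2)
          (fun i _ => Finset.sum_nonneg fun j _ =>
            mul_nonneg (mul_nonneg (hwpos i).le (hwpos j).le) (sq_nonneg _))
          (Finset.mem_univ a)
      linarith
    have hdet_ge : (1/2) * ((K (L/h)) ^ 2 * D ^ 2)
        ≤ (∑ i, w i) * (∑ i, w i * ω i ^ 2) - (∑ i, w i * ω i) * (∑ i, w i * ω i) := by
      rw [sum_identity]
      have h1 : (K (L/h)) ^ 2 * D ^ 2 ≤ w a * w bb * (ω a - ω bb) ^ 2 := by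
        rw [hab]
        have hcc : K (L / h) * K (L / h) ≤ w a * w bb :=
          mul_le_mul (hwge a) (hwge bb) hc.le (hwpos a).le
        nlinarith [mul_nonneg (sub_nonneg.2 hcc) (sq_nonneg D)]
      linarith
    have hdetpos : 0 < (∑ i, w i) * (∑ i, w i * ω i ^ 2) - (∑ i, w i * ω i) * (∑ i, w i * ω i) := by
      have hp : 0 < K (L / h) ^ 2 * D ^ 2 := by positivity
      linarith
    -- numerator bound
    have hNbound : |(∑ i, w i) * (∑ i, w i * ω i * F i) - (∑ i, w i * ω i) * (∑ i, w i * F i)|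
        ≤ B * D := by
      rw [num_identity]
      calc |∑ i, ∑ j, w i * w j * (ω j - ω i) * F j|
          ≤ ∑ i, |∑ j, w i * w j * (ω j - ω i) * F j| := Finset.abs_sum_le_sum_abs _ _
        _ ≤ ∑ i : Fin n, ∑ j : Fin n, K 0 * K 0 * D * 1 := by
            refine Finset.sum_le_sum fun i _ => ?_
            refine (Finset.abs_sum_le_sum_abs _ _).trans ?_
            refine Finset.sum_le_sum fun j _ => ?_
            rw [abs_mul, abs_mul, abs_mul, abs_of_pos (hwpos i), abs_of_pos (hwpos j),
              abs_of_nonneg (hF0 j)]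
            have hKK : (0:ℝ) ≤ K 0 * K 0 := mul_nonneg hK0.le hK0.le
            exact mul_le_mul
              (mul_le_mul (mul_le_mul (hwle i) (hwle j) (hwpos j).le hK0.le) (hDd j i)
                (abs_nonneg _) hKK)
              (hF1 j) (hF0 j) (mul_nonneg hKK hDpos.le)
        _ = B * D := by
            simp [Finset.sum_const, Finset.card_univ]
            rw [hB]; ring
    -- slope formula
    have hslope : lpdSlope n K h 0 ω
        = ((∑ i, w i) * (∑ i, w i * ω i * F i) - (∑ i, w i * ω i) * (∑ i, w i * F i))
          / ((∑ i, w i) * (∑ i, w i * ω i ^ 2) - (∑ i, w i * ω i) * (∑ i, w i * ω i)) := by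
      have := slope_formula w ω F hdetpos.ne'
      simp only [lpdSlope, sub_zero]
      exact this
    -- real bound
    have hsq : (lpdSlope n K h 0 ω) ^ 2 ≤ A ^ 2 / D ^ 2 := by
      rw [hslope, div_pow, div_le_div_iff₀ (by positivity) (by positivity)]
      set N := (∑ i, w i) * (∑ i, w i * ω i * F i) - (∑ i, w i * ω i) * (∑ i, w i * F i) with hN
      set dt := (∑ i, w i) * (∑ i, w i * ω i ^ 2) - (∑ i, w i * ω i) * (∑ i, w i * ω i) with hdt
      have hN2 : N ^ 2 ≤ B ^ 2 * D ^ 2 := by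
        calc N ^ 2 = |N| ^ 2 := (sq_abs N).symm
          _ ≤ (B * D) ^ 2 := pow_le_pow_left₀ (abs_nonneg N) hNbound 2
          _ = B ^ 2 * D ^ 2 := by ring
      have hdt2 : ((1/2) * ((K (L/h)) ^ 2 * D ^ 2)) ^ 2 ≤ dt ^ 2 := by
        apply pow_le_pow_left₀ (by positivity) hdet_ge
      have hid : A ^ 2 * ((1/2) * ((K (L/h)) ^ 2 * D ^ 2)) ^ 2 = B ^ 2 * (D ^ 2 * D ^ 2) := by
        rw [hA, hB]; field_simp
      have h3 : A ^ 2 * ((1/2) * ((K (L/h)) ^ 2 * D ^ 2)) ^ 2 ≤ A ^ 2 * dt ^ 2 :=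
        mul_le_mul_of_nonneg_left hdt2 (by positivity)
      calc N ^ 2 * D ^ 2 ≤ (B ^ 2 * D ^ 2) * D ^ 2 :=
            mul_le_mul_of_nonneg_right hN2 (sq_nonneg D)
        _ = B ^ 2 * (D ^ 2 * D ^ 2) := by ring
        _ = A ^ 2 * ((1/2) * ((K (L/h)) ^ 2 * D ^ 2)) ^ 2 := hid.symm
        _ ≤ A ^ 2 * dt ^ 2 := h3
    refine (ENNReal.ofReal_le_ofReal hsq).trans ?_
    rw [ENNReal.ofReal_div_of_pos (by positivity), div_eq_mul_inv]
    refine mul_le_mul_right ?_ _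
    -- key: (ofReal (D^2))⁻¹ ≤ Phi * (Phi * Phi)
    have hPj : ∀ jj : Fin n, Phi (ω 0) (ω jj)
        = ((ENNReal.ofReal |ω 0 - ω jj|) ^ ((2:ℝ)/3))⁻¹ := by
      intro jj
      rw [Phi, ← ENNReal.rpow_neg]
    set u : Fin n → ℝ≥0∞ := fun jj => (ENNReal.ofReal |ω 0 - ω jj|) ^ ((2:ℝ)/3) with hu
    have hufin : ∀ jj, u jj ≠ ⊤ :=
      fun jj => ENNReal.rpow_ne_top_of_nonneg (by norm_num) ENNReal.ofReal_ne_top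
    have humono : ∀ jj : Fin n, u jj ≤ (ENNReal.ofReal D) ^ ((2:ℝ)/3) :=
      fun jj => ENNReal.rpow_le_rpow (ENNReal.ofReal_le_ofReal (hDd 0 jj)) (by norm_num)
    have hD0 : ENNReal.ofReal D ≠ 0 := (ENNReal.ofReal_pos.2 hDpos).ne'
    have hprod_le : u j1 * (u j2 * u j3) ≤ ENNReal.ofReal (D ^ 2) := by
      calc u j1 * (u j2 * u j3)
          ≤ (ENNReal.ofReal D) ^ ((2:ℝ)/3) *
            ((ENNReal.ofReal D) ^ ((2:ℝ)/3) * (ENNReal.ofReal D) ^ ((2:ℝ)/3)) :=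
            mul_le_mul' (humono j1) (mul_le_mul' (humono j2) (humono j3))
        _ = (ENNReal.ofReal D) ^ ((2:ℝ)) := by
            rw [← ENNReal.rpow_add _ _ hD0 ENNReal.ofReal_ne_top,
              ← ENNReal.rpow_add _ _ hD0 ENNReal.ofReal_ne_top]
            norm_num
        _ = ENNReal.ofReal (D ^ (2:ℝ)) := ENNReal.ofReal_rpow_of_pos hDpos
        _ = ENNReal.ofReal (D ^ 2) := by rw [← Real.rpow_natCast D 2]; norm_num
    calc (ENNReal.ofReal (D ^ 2))⁻¹ ≤ (u j1 * (u j2 * u j3))⁻¹ := ENNReal.inv_le_inv' hprod_le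
      _ = (u j1)⁻¹ * ((u j2)⁻¹ * (u j3)⁻¹) := by
          rw [ENNReal.mul_inv (Or.inr (ENNReal.mul_ne_top (hufin j2) (hufin j3)))
              (Or.inl (hufin j1)),
            ENNReal.mul_inv (Or.inr (hufin j3)) (Or.inl (hufin j2))]
      _ = Phi (ω 0) (ω j1) * (Phi (ω 0) (ω j2) * Phi (ω 0) (ω j3)) := by
          rw [hPj j1, hPj j2, hPj j3]


lemma measurable_Phi_right (x : ℝ) : Measurable fun y => Phi x y := by
  exact ((measurable_const.sub measurable_id).abs.ennreal_ofReal).pow measurable_const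

lemma intervalIntegrable_abs_rpow {r : ℝ} (hr : -1 < r) (a b : ℝ) :
    IntervalIntegrable (fun t : ℝ => |t| ^ r) volume a b := by
  have key : ∀ c : ℝ, 0 ≤ c → IntervalIntegrable (fun t : ℝ => |t| ^ r) volume 0 c := by
    intro c hc
    rw [intervalIntegrable_iff_integrableOn_Ioc_of_le hc]
    have h2 := (intervalIntegral.intervalIntegrable_rpow' (r := r) hr (a := 0) (b := c))
    rw [intervalIntegrable_iff_integrableOn_Ioc_of_le hc] at h2
    exact h2.congr_fun (fun t ht => by rw [abs_of_pos ht.1]) measurableSet_Ioc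
  have zero_to : ∀ c : ℝ, IntervalIntegrable (fun t : ℝ => |t| ^ r) volume 0 c := by
    intro c
    rcases le_total 0 c with hc | hc
    · exact key c hc
    · have h := (IntervalIntegrable.iff_comp_neg (by simp)).mp (key (-c) (by linarith))
      simp only [abs_neg, neg_zero, neg_neg] at h
      exact h
  exact (zero_to a).symm.trans (zero_to b)

lemma integral_abs_rpow (L : ℝ) (hL : 0 < L) :
    ∫ t in (-L)..L, |t| ^ (-(2/3) : ℝ) = 6 * L ^ ((1:ℝ)/3) := by
  have h1 : ∫ t in (0:ℝ)..L, |t| ^ (-(2/3) : ℝ) = 3 * L ^ ((1:ℝ)/3) := by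
    have heq : ∫ t in (0:ℝ)..L, |t| ^ (-(2/3) : ℝ) = ∫ t in (0:ℝ)..L, t ^ (-(2/3) : ℝ) := by
      apply intervalIntegral.integral_congr
      intro t ht
      rw [Set.uIcc_of_le hL.le] at ht
      rcases eq_or_lt_of_le ht.1 with h | h
      · simp [← h]
      · simp [abs_of_pos h]
    rw [heq, integral_rpow (Or.inl (by norm_num))]
    rw [Real.zero_rpow (by norm_num)]
    norm_num
    ring
  have h2 : ∫ t in (-L)..(0:ℝ), |t| ^ (-(2/3) : ℝ) = 3 * L ^ ((1:ℝ)/3) := by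
    have := intervalIntegral.integral_comp_neg (a := -L) (b := 0) (fun t : ℝ => |t| ^ (-(2/3) : ℝ))
    simp only [abs_neg, neg_zero, neg_neg] at this
    rw [this, h1]
  rw [← intervalIntegral.integral_add_adjacent_intervals
    (intervalIntegrable_abs_rpow (by norm_num) (-L) 0)
    (intervalIntegrable_abs_rpow (by norm_num) 0 L), h1, h2]
  ring

lemma lintegral_Phi_le (f : ℝ → ℝ) (L Δ : ℝ) (hL : 0 < L)
    (hf_meas : Measurable f)
    (hf_supp : ∀ x, x ∉ Set.Ico (-L) (0 : ℝ) → f x = 0)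
    (hf_ub : ∀ x ∈ Set.Ico (-L) (0 : ℝ), f x ≤ Δ) (x : ℝ) :
    ∫⁻ y, Phi x y ∂(volume.withDensity fun t => ENNReal.ofReal (f t))
      ≤ ENNReal.ofReal Δ *
        (ENNReal.ofReal (6 * L ^ ((1:ℝ)/3)) + ENNReal.ofReal (L ^ (-(2/3) : ℝ)) * ENNReal.ofReal L) := by
  rw [lintegral_withDensity_eq_lintegral_mul _ hf_meas.ennreal_ofReal (measurable_Phi_right x)]
  have step1 : ∀ y : ℝ, ((fun t => ENNReal.ofReal (f t)) * fun y => Phi x y) y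
      ≤ ENNReal.ofReal Δ * (Set.Ico (-L) (0:ℝ)).indicator (fun y => Phi x y) y := by
    intro y
    simp only [Pi.mul_apply]
    by_cases hy : y ∈ Set.Ico (-L) (0:ℝ)
    · rw [Set.indicator_of_mem hy]
      exact mul_le_mul' (ENNReal.ofReal_le_ofReal (hf_ub y hy)) le_rfl
    · rw [Set.indicator_of_notMem hy, hf_supp y hy, ENNReal.ofReal_zero, zero_mul, mul_zero]
  refine (lintegral_mono step1).trans ?_
  rw [lintegral_const_mul _ ((measurable_Phi_right x).indicator measurableSet_Ico)]
  refine mul_le_mul_right ?_ _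
  rw [lintegral_indicator measurableSet_Ico]
  -- split into near and far part
  have step2 : ∀ y : ℝ, Phi x y ≤
      (Set.Ioc (x - L) (x + L)).indicator (fun y => Phi x y) y + ENNReal.ofReal (L ^ (-(2/3) : ℝ)) := by
    intro y
    by_cases hy : y ∈ Set.Ioc (x - L) (x + L)
    · rw [Set.indicator_of_mem hy]; exact le_self_add
    · rw [Set.indicator_of_notMem hy, zero_add]
      have hfar : L ≤ |x - y| := by
        simp only [Set.mem_Ioc, not_and_or, not_lt, not_le] at hy
        rcases hy with hy | hy
        · rw [abs_of_nonneg (by linarith)]; linarith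
        · rw [abs_of_nonpos (by linarith)]; linarith
      rw [Phi, ENNReal.rpow_neg, ← ENNReal.ofReal_rpow_of_pos hL, ← ENNReal.rpow_neg]
      have : ENNReal.ofReal L ^ ((2:ℝ)/3) ≤ ENNReal.ofReal |x - y| ^ ((2:ℝ)/3) :=
        ENNReal.rpow_le_rpow (ENNReal.ofReal_le_ofReal hfar) (by norm_num)
      rw [ENNReal.rpow_neg, ENNReal.rpow_neg]
      exact ENNReal.inv_le_inv' this
  calc ∫⁻ y in Set.Ico (-L) (0:ℝ), Phi x y
      ≤ ∫⁻ y in Set.Ico (-L) (0:ℝ),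
          ((Set.Ioc (x - L) (x + L)).indicator (fun y => Phi x y) y
            + ENNReal.ofReal (L ^ (-(2/3) : ℝ))) := lintegral_mono fun y => step2 y
    _ = (∫⁻ y in Set.Ico (-L) (0:ℝ), (Set.Ioc (x - L) (x + L)).indicator (fun y => Phi x y) y)
        + ENNReal.ofReal (L ^ (-(2/3) : ℝ)) * volume (Set.Ico (-L) (0:ℝ)) := by
        rw [lintegral_add_right _ measurable_const, lintegral_const,
          Measure.restrict_apply_univ]
    _ ≤ ENNReal.ofReal (6 * L ^ ((1:ℝ)/3)) + ENNReal.ofReal (L ^ (-(2/3) : ℝ)) * ENNReal.ofReal L := by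
        gcongr
        · calc ∫⁻ y in Set.Ico (-L) (0:ℝ), (Set.Ioc (x - L) (x + L)).indicator (fun y => Phi x y) y
              ≤ ∫⁻ y, (Set.Ioc (x - L) (x + L)).indicator (fun y => Phi x y) y :=
              setLIntegral_le_lintegral _ _
            _ = ∫⁻ y in Set.Ioc (x - L) (x + L), Phi x y := lintegral_indicator measurableSet_Ioc _
            _ ≤ ENNReal.ofReal (6 * L ^ ((1:ℝ)/3)) := by
              have haeeq : ∀ᵐ y ∂(volume.restrict (Set.Ioc (x - L) (x + L))),
                  Phi x y = ENNReal.ofReal (|x - y| ^ (-(2/3) : ℝ)) := by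
                refine ae_restrict_of_ae ?_
                have hx : ∀ y : ℝ, y ≠ x → Phi x y = ENNReal.ofReal (|x - y| ^ (-(2/3) : ℝ)) := by
                  intro y hy
                  rw [Phi, ENNReal.ofReal_rpow_of_pos (abs_pos.2 (sub_ne_zero.2 (Ne.symm hy)))]
                have : {y : ℝ | ¬ Phi x y = ENNReal.ofReal (|x - y| ^ (-(2/3) : ℝ))} ⊆ {x} := by
                  intro y hy
                  by_contra hyx
                  exact hy (hx y (by simpa [Set.mem_singleton_iff] using hyx))
                exact measure_mono_null this (measure_singleton x)
              rw [lintegral_congr_ae haeeq]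
              have hint : IntegrableOn (fun y => |x - y| ^ (-(2/3) : ℝ)) (Set.Ioc (x - L) (x + L)) volume := by
                have h1 : IntervalIntegrable (fun y : ℝ => |x - y| ^ (-(2/3) : ℝ)) volume (x - L) (x + L) := by
                  have h0 := (intervalIntegrable_abs_rpow (r := -(2/3)) (by norm_num) (-L) L).comp_sub_left x
                  rw [sub_neg_eq_add] at h0
                  exact h0.symm
                rwa [intervalIntegrable_iff_integrableOn_Ioc_of_le (by linarith)] at h1
              rw [← MeasureTheory.ofReal_integral_eq_lintegral_ofReal hint
                (Filter.Eventually.of_forall fun y => Real.rpow_nonneg (abs_nonneg _) _)]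
              apply ENNReal.ofReal_le_ofReal
              rw [← intervalIntegral.integral_of_le (by linarith : x - L ≤ x + L)]
              have := intervalIntegral.integral_comp_sub_left (a := x - L) (b := x + L)
                (fun t : ℝ => |t| ^ (-(2/3) : ℝ)) x
              simp only [sub_sub_cancel, sub_add_cancel_left] at this
              rw [this, integral_abs_rpow L hL]
        · exact le_of_eq (by rw [Real.volume_Ico]; norm_num)


/-- Theorem 1′: Let `X₁, …, Xₙ`, `n ≥ 7`, be i.i.d. with density `f` on
`[-L, 0)` with `0 < δ ≤ f ≤ Δ`, and let the kernel `K` be everywhere positive, symmetric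
about zero and monotonically decreasing in `|u|`. Then the local linear density estimator at
the right boundary `0` has a finite second moment: `E[f̂(0)²] < ∞`. -/
theorem lpd_finite_second_moment_noncompact_kernel
    (n : ℕ) (hn : 7 ≤ n) (f K : ℝ → ℝ) (L δ Δ h : ℝ)
    (hL : 0 < L) (hδ : 0 < δ) (hΔ : δ ≤ Δ) (hh : 0 < h)
    (hf_meas : Measurable f)
    (hf_supp : ∀ x, x ∉ Set.Ico (-L) (0 : ℝ) → f x = 0)
    (hf_lb : ∀ x ∈ Set.Ico (-L) (0 : ℝ), δ ≤ f x)
    (hf_ub : ∀ x ∈ Set.Ico (-L) (0 : ℝ), f x ≤ Δ)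
    (hf_dens : ∫ x, f x = 1)
    (hK_pos : ∀ u, 0 < K u)
    (hK_symm : ∀ u, K (-u) = K u)
    (hK_mono : ∀ u v : ℝ, 0 ≤ u → u ≤ v → K v ≤ K u) :
    ∫⁻ ω, ENNReal.ofReal ((lpdSlope n K h 0 ω) ^ 2)
      ∂(Measure.pi fun _ : Fin n => volume.withDensity fun x => ENNReal.ofReal (f x)) < ⊤ := by

  haveI : NeZero n := ⟨by omega⟩
  set ν : Measure ℝ := volume.withDensity fun x => ENNReal.ofReal (f x) with hν
  have hf_nonneg : ∀ x, 0 ≤ f x := by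
    intro x
    by_cases hx : x ∈ Set.Ico (-L) (0:ℝ)
    · exact hδ.le.trans (hf_lb x hx)
    · rw [hf_supp x hx]
  have hf_int : Integrable f := by
    have hfi : f = (Set.Ico (-L) (0:ℝ)).indicator f := by
      funext x
      by_cases hx : x ∈ Set.Ico (-L) (0:ℝ)
      · rw [Set.indicator_of_mem hx]
      · rw [Set.indicator_of_notMem hx, hf_supp x hx]
    rw [hfi, integrable_indicator_iff measurableSet_Ico]
    apply Measure.integrableOn_of_bounded (M := Δ)
    · rw [Real.volume_Ico]; exact ENNReal.ofReal_ne_top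
    · exact hf_meas.aestronglyMeasurable
    · filter_upwards [ae_restrict_mem measurableSet_Ico] with x hx
      rw [Real.norm_eq_abs, abs_of_nonneg (hf_nonneg x)]
      exact hf_ub x hx
  haveI hprob : IsProbabilityMeasure ν := by
    constructor
    rw [hν, withDensity_apply _ MeasurableSet.univ, Measure.restrict_univ,
      ← MeasureTheory.ofReal_integral_eq_lintegral_ofReal hf_int (ae_of_all _ hf_nonneg),
      hf_dens, ENNReal.ofReal_one]
  set P : Measure (Fin n → ℝ) := Measure.pi fun _ : Fin n => ν with hP
  have hsuppν : ν (Set.Ico (-L) (0:ℝ))ᶜ = 0 := by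
    rw [hν, withDensity_apply _ measurableSet_Ico.compl]
    rw [setLIntegral_congr_fun measurableSet_Ico.compl
      (fun x hx => by rw [hf_supp x hx, ENNReal.ofReal_zero])]
    simp
  have hae : ∀ᵐ ω ∂P, ∀ i, ω i ∈ Set.Ico (-L) (0:ℝ) := by
    rw [MeasureTheory.ae_all_iff]
    intro i
    rw [ae_iff, hP]
    exact MeasureTheory.Measure.pi_eval_preimage_null (fun _ : Fin n => ν) (i := i) hsuppν
  set j1 : Fin n := ⟨1, by omega⟩ with hj1
  set j2 : Fin n := ⟨2, by omega⟩ with hj2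
  set j3 : Fin n := ⟨3, by omega⟩ with hj3
  have h12 : j1 ≠ j2 := by simp [hj1, hj2, Fin.ext_iff]
  have h13 : j1 ≠ j3 := by simp [hj1, hj3, Fin.ext_iff]
  have h23 : j2 ≠ j3 := by simp [hj2, hj3, Fin.ext_iff]
  set CE : ℝ≥0∞ := ENNReal.ofReal ((2 * (n : ℝ) ^ 2 * (K 0) ^ 2 / (K (L / h)) ^ 2) ^ 2) with hCE
  set M : ℝ≥0∞ := ENNReal.ofReal Δ *
    (ENNReal.ofReal (6 * L ^ ((1:ℝ)/3)) + ENNReal.ofReal (L ^ (-(2/3) : ℝ)) * ENNReal.ofReal L)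
    with hM
  have hM_ne_top : M ≠ ⊤ := by
    rw [hM]
    exact ENNReal.mul_ne_top ENNReal.ofReal_ne_top
      (ENNReal.add_ne_top.2 ⟨ENNReal.ofReal_ne_top,
        ENNReal.mul_ne_top ENNReal.ofReal_ne_top ENNReal.ofReal_ne_top⟩)
  set g : (Fin n → ℝ) → ℝ≥0∞ :=
    fun ω => Phi (ω 0) (ω j1) * (Phi (ω 0) (ω j2) * Phi (ω 0) (ω j3)) with hg
  have hPhi_meas : ∀ j : Fin n, Measurable fun ω : Fin n → ℝ => Phi (ω 0) (ω j) := by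
    intro j
    exact (((measurable_pi_apply 0).sub (measurable_pi_apply j)).abs.ennreal_ofReal).pow
      measurable_const
  have hg_meas : Measurable g :=
    (hPhi_meas j1).mul ((hPhi_meas j2).mul (hPhi_meas j3))
  have hsingle : ∀ x : ℝ, ∫⁻ y, Phi x y ∂ν ≤ M :=
    fun x => lintegral_Phi_le f L Δ hL hf_meas hf_supp hf_ub x
  -- main integral bound via marginals
  have hbound : ∫⁻ ω, g ω ∂P ≤ M * (M * M) := by
    have hJ : ∀ x : Fin n → ℝ,
        (∫⋯∫⁻_{j1, j2, j3}, g ∂(fun _ : Fin n => ν)) x ≤ M * (M * M) := by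
      intro x
      have hmem1 : j1 ∉ ({j2, j3} : Finset (Fin n)) := by simp [h12, h13]
      have hmem2 : j2 ∉ ({j3} : Finset (Fin n)) := by simp [h23]
      rw [MeasureTheory.lmarginal_insert _ hg_meas hmem1]
      simp_rw [MeasureTheory.lmarginal_insert _ hg_meas hmem2,
        MeasureTheory.lmarginal_singleton]
      have hval : ∀ (t1 t2 t3 : ℝ),
          g (Function.update (Function.update (Function.update x j1 t1) j2 t2) j3 t3)
            = Phi (x 0) t1 * (Phi (x 0) t2 * Phi (x 0) t3) := by
        intro t1 t2 t3
        have h0j1 : (0 : Fin n) ≠ j1 := by simp [hj1, Fin.ext_iff]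
        have h0j2 : (0 : Fin n) ≠ j2 := by simp [hj2, Fin.ext_iff]
        have h0j3 : (0 : Fin n) ≠ j3 := by simp [hj3, Fin.ext_iff]
        rw [hg]
        simp only [Function.update_self, Function.update_of_ne h0j1,
          Function.update_of_ne h0j2, Function.update_of_ne h0j3,
          Function.update_of_ne h12, Function.update_of_ne h13, Function.update_of_ne h23]
      simp_rw [hval]
      calc ∫⁻ t1, ∫⁻ t2, ∫⁻ t3, Phi (x 0) t1 * (Phi (x 0) t2 * Phi (x 0) t3) ∂ν ∂ν ∂ν
          ≤ ∫⁻ t1, ∫⁻ t2, Phi (x 0) t1 * Phi (x 0) t2 * M ∂ν ∂ν := by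
            refine lintegral_mono fun t1 => lintegral_mono fun t2 => ?_
            have h1 : ∫⁻ t3, Phi (x 0) t1 * (Phi (x 0) t2 * Phi (x 0) t3) ∂ν
                = (Phi (x 0) t1 * Phi (x 0) t2) * ∫⁻ t3, Phi (x 0) t3 ∂ν := by
              simp_rw [← mul_assoc]
              exact lintegral_const_mul _ (measurable_Phi_right (x 0))
            rw [h1]
            exact mul_le_mul_right (hsingle (x 0)) _
        _ ≤ ∫⁻ t1, Phi (x 0) t1 * M * M ∂ν := by
            refine lintegral_mono fun t1 => ?_
            have h2 : ∫⁻ t2, Phi (x 0) t1 * Phi (x 0) t2 * M ∂ν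
                = (Phi (x 0) t1 * M) * ∫⁻ t2, Phi (x 0) t2 ∂ν := by
              simp_rw [mul_right_comm (Phi (x 0) t1) _ M]
              exact lintegral_const_mul _ (measurable_Phi_right (x 0))
            rw [h2]
            exact mul_le_mul_right (hsingle (x 0)) _
        _ ≤ M * (M * M) := by
            rw [lintegral_mul_const _ ((measurable_Phi_right (x 0)).mul_const M),
              lintegral_mul_const _ (measurable_Phi_right (x 0))]
            calc (∫⁻ t1, Phi (x 0) t1 ∂ν) * M * M ≤ M * M * M := by
                  exact mul_le_mul_left (mul_le_mul_left (hsingle (x 0)) M) M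
              _ = M * (M * M) := mul_assoc M M M
    have hconst : ∀ (s : Finset (Fin n)) (c : ℝ≥0∞) (x : Fin n → ℝ),
        (∫⋯∫⁻_s, (fun _ => c) ∂(fun _ : Fin n => ν)) x = c := by
      intro s c
      induction s using Finset.induction with
      | empty => intro x; rw [MeasureTheory.lmarginal_empty]
      | @insert i s hi ih =>
          intro x
          rw [MeasureTheory.lmarginal_insert _ measurable_const hi]
          simp_rw [ih]
          simp
    have hle := MeasureTheory.lintegral_le_of_lmarginal_le (μ := fun _ : Fin n => ν)
      ({j1, j2, j3} : Finset (Fin n)) hg_meas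
      (measurable_const : Measurable fun _ : Fin n → ℝ => M * (M * M))
      (fun x => (hJ x).trans_eq (hconst _ _ x).symm)
    refine hle.trans ?_
    rw [lintegral_const]
    haveI : IsProbabilityMeasure P := by rw [hP]; infer_instance
    rw [measure_univ, mul_one]
  calc ∫⁻ ω, ENNReal.ofReal ((lpdSlope n K h 0 ω) ^ 2) ∂P
      ≤ ∫⁻ ω, CE * g ω ∂P := by
        refine lintegral_mono_ae ?_
        filter_upwards [hae] with ω hω
        exact slope_sq_le K L h hL hh hK_pos hK_symm hK_mono j1 j2 j3 h12 h13 h23 ω hω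
    _ = CE * ∫⁻ ω, g ω ∂P := lintegral_const_mul _ hg_meas
    _ ≤ CE * (M * (M * M)) := mul_le_mul_right hbound _
    _ < ⊤ := by
        rw [lt_top_iff_ne_top]
        exact ENNReal.mul_ne_top ENNReal.ofReal_ne_top
          (ENNReal.mul_ne_top hM_ne_top (ENNReal.mul_ne_top hM_ne_top hM_ne_top))
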